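/- Taking W = B^c in the pivotality bound: for f : {-1,1}^I → ℝ and B ⊆ I, ∑_{∅≠S⊆B} f̂(S)² ≤ 4·‖f‖_∞²·P[Λ_B]², where Λ_B is the event that B is pivotal for f. -/
import Mathlib


open Finset

variable {I : Type*} [Fintype I] [DecidableEq I]

/-- Expectation with respect to the uniform probability measure on `{-1,1}^I ≅ (I → Bool)`. -/
noncomputable def expec (f : (I → Bool) → ℝ) : ℝ :=
  (∑ ω : I → Bool, f ω) / (Fintype.card (I → Bool) : ℝ)

/-- The value `±1` of a bit. -/
noncomputable def sgn (b : Bool) : ℝ := if b then 1 else -1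

/-- The Walsh function `χ_S(ω) = ∏_{i ∈ S} ω_i`. -/
noncomputable def chi (S : Finset I) (ω : I → Bool) : ℝ := ∏ i ∈ S, sgn (ω i)

/-- The Fourier coefficient `f̂(S) = E[f ⬝ χ_S]`. -/
noncomputable def fhat (f : (I → Bool) → ℝ) (S : Finset I) : ℝ :=
  expec (fun ω => f ω * chi S ω)

open Classical in
/-- The indicator of the event `Λ_B` that the set of bits `B` is pivotal for `f`. -/
noncomputable def pivInd (f : (I → Bool) → ℝ) (B : Finset I) (ω : I → Bool) : ℝ :=
  if ∃ ω' : I → Bool, (∀ i ∉ B, ω' i = ω i) ∧ f ω' ≠ f ω then 1 else 0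

/-- The sup norm `‖f‖_∞`. -/
noncomputable def supnorm (f : (I → Bool) → ℝ) : ℝ := ⨆ ω : I → Bool, |f ω|

/-! ### Auxiliary lemmas about `expec` -/

lemma Ncast_pos : (0:ℝ) < (Fintype.card (I → Bool) : ℝ) := by
  exact_mod_cast Fintype.card_pos

lemma expec_mono {a b : (I → Bool) → ℝ} (h : ∀ ω, a ω ≤ b ω) : expec a ≤ expec b := by
  unfold expec
  exact div_le_div_of_nonneg_right (Finset.sum_le_sum fun ω _ => h ω) Ncast_pos.le

lemma expec_const (c : ℝ) : expec (fun _ : I → Bool => c) = c := by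
  unfold expec
  rw [Finset.sum_const, Finset.card_univ, nsmul_eq_mul]
  exact mul_div_cancel_left₀ c Ncast_pos.ne'

lemma abs_expec_le (a : (I → Bool) → ℝ) : |expec a| ≤ expec fun ω => |a ω| := by
  unfold expec
  rw [abs_div, abs_of_pos Ncast_pos]
  exact div_le_div_of_nonneg_right (Finset.abs_sum_le_sum_abs _ _) Ncast_pos.le

lemma expec_sub (a b : (I → Bool) → ℝ) :
    expec (fun ω => a ω - b ω) = expec a - expec b := by
  unfold expec
  rw [Finset.sum_sub_distrib, sub_div]

lemma expec_const_mul (c : ℝ) (a : (I → Bool) → ℝ) :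
    expec (fun ω => c * a ω) = c * expec a := by
  unfold expec
  rw [← Finset.mul_sum, mul_div_assoc]

lemma expec_sum {α : Type*} (s : Finset α) (F : α → (I → Bool) → ℝ) :
    expec (fun ω => ∑ x ∈ s, F x ω) = ∑ x ∈ s, expec (F x) := by
  unfold expec
  rw [← Finset.sum_div, Finset.sum_comm]

/-! ### Walsh functions -/

lemma sgn_mul_self (b : Bool) : sgn b * sgn b = 1 := by cases b <;> simp [sgn]

lemma sgn_not (b : Bool) : sgn (!b) = - sgn b := by cases b <;> simp [sgn]

lemma sum_chi (S : Finset I) (hS : S.Nonempty) : ∑ ω : I → Bool, chi S ω = 0 := by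
  obtain ⟨i, hi⟩ := hS
  refine Finset.sum_involution (fun ω _ => Function.update ω i (!ω i)) ?_ ?_
    (fun ω _ => Finset.mem_univ _) ?_
  · intro ω _
    have hupd : ∀ j, sgn (Function.update ω i (!ω i) j)
        = Function.update (fun j => sgn (ω j)) i (sgn (!ω i)) j := by
      intro j
      by_cases h : j = i
      · subst h; simp
      · simp [Function.update_of_ne h]
    have h1 : chi S (Function.update ω i (!ω i)) = - chi S ω := by
      unfold chi
      simp only [hupd]
      rw [Finset.prod_update_of_mem hi, sgn_not,
        ← Finset.mul_prod_erase S _ hi, Finset.erase_eq]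
      ring
    rw [h1]; ring
  · intro ω _ _ h
    have := congrFun h i
    simp at this
  · intro ω _
    funext j
    by_cases h : j = i
    · subst h; simp
    · simp [Function.update_of_ne h]

lemma expec_chi (S : Finset I) : expec (chi S) = if S = ∅ then 1 else 0 := by
  split
  · next h =>
    subst h
    rw [show chi (∅ : Finset I) = fun _ => (1:ℝ) from funext fun ω => by simp [chi]]
    exact expec_const 1
  · next h =>
    unfold expec
    rw [sum_chi S (Finset.nonempty_iff_ne_empty.mpr h), zero_div]

lemma chi_mul_chi (S T : Finset I) (ω : I → Bool) :
    chi S ω * chi T ω = chi ((S \ T) ∪ (T \ S)) ω := by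
  unfold chi
  have hS : ∏ i ∈ S, sgn (ω i) = (∏ i ∈ S \ T, sgn (ω i)) * ∏ i ∈ S ∩ T, sgn (ω i) := by
    rw [← Finset.prod_union (Finset.disjoint_sdiff_inter S T), Finset.sdiff_union_inter]
  have hT : ∏ i ∈ T, sgn (ω i) = (∏ i ∈ T \ S, sgn (ω i)) * ∏ i ∈ S ∩ T, sgn (ω i) := by
    rw [Finset.inter_comm]
    rw [← Finset.prod_union (Finset.disjoint_sdiff_inter T S), Finset.sdiff_union_inter]
  have hone : (∏ i ∈ S ∩ T, sgn (ω i)) * ∏ i ∈ S ∩ T, sgn (ω i) = 1 := by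
    rw [← Finset.prod_mul_distrib]
    exact Finset.prod_eq_one fun i _ => sgn_mul_self (ω i)
  rw [hS, hT, Finset.prod_union disjoint_sdiff_sdiff, mul_mul_mul_comm, hone, mul_one]

lemma sum_chi_chi (σ ω : I → Bool) :
    ∑ S : Finset I, chi S σ * chi S ω
      = if σ = ω then (Fintype.card (I → Bool) : ℝ) else 0 := by
  have h1 : ∀ S : Finset I, chi S σ * chi S ω = ∏ i ∈ S, (sgn (σ i) * sgn (ω i)) := by
    intro S; unfold chi; rw [Finset.prod_mul_distrib]
  simp only [h1]
  have h2 : ∏ i : I, (sgn (σ i) * sgn (ω i) + 1)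
      = ∑ S : Finset I, ∏ i ∈ S, (sgn (σ i) * sgn (ω i)) := by
    rw [Finset.prod_add]
    rw [← Finset.powerset_univ]
    exact Finset.sum_congr rfl fun t _ => by simp
  rw [← h2]
  by_cases h : σ = ω
  · subst h
    rw [if_pos rfl]
    have hh : ∀ i : I, sgn (σ i) * sgn (σ i) + 1 = 2 := fun i => by
      rw [sgn_mul_self]; norm_num
    simp only [hh]
    rw [Finset.prod_const, Finset.card_univ, Fintype.card_fun, Fintype.card_bool]
    push_cast
    ring
  · rw [if_neg h]
    obtain ⟨i, hi⟩ := Function.ne_iff.mp h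
    apply Finset.prod_eq_zero (Finset.mem_univ i)
    have : sgn (σ i) * sgn (ω i) = -1 := by
      cases hσ : σ i <;> cases hω : ω i <;> simp_all [sgn]
    rw [this]; ring

lemma fourier_inversion (h : (I → Bool) → ℝ) (ω : I → Bool) :
    ∑ S : Finset I, fhat h S * chi S ω = h ω := by
  have key : ∑ S : Finset I, fhat h S * chi S ω
      = (∑ σ : I → Bool, ∑ S : Finset I, h σ * chi S σ * chi S ω)
          / (Fintype.card (I → Bool) : ℝ) := by
    unfold fhat expec
    simp only [div_mul_eq_mul_div, Finset.sum_mul, ← Finset.sum_div]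
    rw [Finset.sum_comm]
  rw [key]
  have inner : ∀ σ, ∑ S : Finset I, h σ * chi S σ * chi S ω
      = h σ * (if σ = ω then (Fintype.card (I → Bool) : ℝ) else 0) := by
    intro σ
    rw [← sum_chi_chi σ ω, Finset.mul_sum]
    exact Finset.sum_congr rfl fun S _ => by ring
  simp only [inner, mul_ite, mul_zero]
  rw [Finset.sum_ite_eq' Finset.univ ω]
  simp only [Finset.mem_univ, if_pos]
  exact mul_div_cancel_right₀ (h ω) Ncast_pos.ne'

lemma parseval (h : (I → Bool) → ℝ) :
    ∑ S : Finset I, fhat h S ^ 2 = expec (fun ω => h ω ^ 2) := by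
  have hpt : ∀ ω, (∑ S : Finset I, fhat h S * (h ω * chi S ω)) = h ω ^ 2 := by
    intro ω
    have : ∑ S : Finset I, fhat h S * (h ω * chi S ω)
        = h ω * ∑ S : Finset I, fhat h S * chi S ω := by
      rw [Finset.mul_sum]
      exact Finset.sum_congr rfl fun S _ => by ring
    rw [this, fourier_inversion]; ring
  calc ∑ S : Finset I, fhat h S ^ 2
      = ∑ S : Finset I, expec (fun ω => fhat h S * (h ω * chi S ω)) := by
        refine Finset.sum_congr rfl fun S _ => ?_
        rw [expec_const_mul]
        rw [show fhat h S = expec (fun ω => h ω * chi S ω) from rfl]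
        ring
    _ = expec (fun ω => ∑ S : Finset I, fhat h S * (h ω * chi S ω)) :=
        (expec_sum _ _).symm
    _ = expec (fun ω => h ω ^ 2) := congrArg expec (funext fun ω => hpt ω)

/-! ### Recombination of configurations -/

/-- Combine `ω` on `B` with `ζ` off `B`. -/
def mB (B : Finset I) (ω ζ : I → Bool) : I → Bool := fun i => if i ∈ B then ω i else ζ i

lemma sum_pair_swap (B : Finset I) (F : (I → Bool) → (I → Bool) → ℝ) :
    ∑ ω : I → Bool, ∑ ζ : I → Bool, F (mB B ω ζ) (mB B ζ ω)
      = ∑ ω : I → Bool, ∑ ζ : I → Bool, F ω ζ := by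
  have hinv : Function.Involutive
      (fun p : (I → Bool) × (I → Bool) => (mB B p.1 p.2, mB B p.2 p.1)) := by
    rintro ⟨ω, ζ⟩
    simp only [Prod.mk.injEq]
    constructor <;> · funext i; by_cases h : i ∈ B <;> simp [mB, h]
  rw [← Finset.sum_product', ← Finset.sum_product', Finset.univ_product_univ]
  exact Equiv.sum_comp hinv.toPerm (fun p => F p.1 p.2)

lemma chi_mB_left (S B : Finset I) (hSB : S ⊆ B) (ω ζ : I → Bool) :
    chi S (mB B ω ζ) = chi S ω :=
  Finset.prod_congr rfl fun i hi => by simp [mB, hSB hi]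

lemma chi_mB_right (S B : Finset I) (hSB : ∀ i ∈ S, i ∉ B) (ω ζ : I → Bool) :
    chi S (mB B ω ζ) = chi S ζ :=
  Finset.prod_congr rfl fun i hi => by simp [mB, hSB i hi]

lemma fhat_gfun (f : (I → Bool) → ℝ) (B S : Finset I) :
    fhat (fun ω => expec (fun ζ => f (mB B ω ζ))) S = if S ⊆ B then fhat f S else 0 := by
  have hN0 : (Fintype.card (I → Bool) : ℝ) ≠ 0 := Ncast_pos.ne'
  have step1 : fhat (fun ω => expec fun ζ => f (mB B ω ζ)) S
      = (∑ ω : I → Bool, ∑ ζ : I → Bool, f (mB B ω ζ) * chi S ω)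
          / (Fintype.card (I → Bool) : ℝ) / (Fintype.card (I → Bool) : ℝ) := by
    unfold fhat expec
    simp only [div_mul_eq_mul_div, Finset.sum_mul, ← Finset.sum_div]
  have step2 : ∑ ω : I → Bool, ∑ ζ : I → Bool, f (mB B ω ζ) * chi S ω
      = (∑ ω : I → Bool, f ω * chi (S ∩ B) ω) * ∑ ζ : I → Bool, chi (S \ B) ζ := by
    rw [Finset.sum_mul_sum]
    rw [← sum_pair_swap B (fun α β => f α * chi (S ∩ B) α * chi (S \ B) β)]
    refine Finset.sum_congr rfl fun ω _ => Finset.sum_congr rfl fun ζ _ => ?_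
    rw [chi_mB_left (S ∩ B) B Finset.inter_subset_right,
      chi_mB_right (S \ B) B (fun i hi => (Finset.mem_sdiff.mp hi).2)]
    have hsplit : chi S ω = chi (S ∩ B) ω * chi (S \ B) ω := by
      unfold chi
      exact (Finset.prod_inter_mul_prod_diff S B _).symm
    rw [hsplit]; ring
  by_cases hSB : S ⊆ B
  · rw [if_pos hSB, step1, step2]
    have h1 : S ∩ B = S := Finset.inter_eq_left.mpr hSB
    have h2 : S \ B = ∅ := Finset.sdiff_eq_empty_iff_subset.mpr hSB
    rw [h1, h2]
    rw [show (∑ ζ : I → Bool, chi (∅ : Finset I) ζ) = (Fintype.card (I → Bool) : ℝ) by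
      simp [chi, Finset.card_univ]]
    rw [mul_div_assoc, div_self hN0, mul_one]
    rfl
  · rw [if_neg hSB, step1, step2]
    rw [← Finset.sdiff_eq_empty_iff_subset] at hSB
    rw [sum_chi (S \ B) (Finset.nonempty_iff_ne_empty.mpr hSB), mul_zero, zero_div,
      zero_div]

lemma fhat_sub (a b : (I → Bool) → ℝ) (S : Finset I) :
    fhat (fun ω => a ω - b ω) S = fhat a S - fhat b S := by
  unfold fhat
  rw [← expec_sub]
  exact congrArg expec (funext fun ω => by ring)

lemma fhat_const (c : ℝ) (S : Finset I) :
    fhat (fun _ : I → Bool => c) S = if S = ∅ then c else 0 := by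
  unfold fhat
  rw [show (fun ω : I → Bool => c * chi S ω) = fun ω => c * chi S ω from rfl,
    expec_const_mul, expec_chi]
  split <;> simp

lemma fhat_empty (f : (I → Bool) → ℝ) : fhat f ∅ = expec f := by
  unfold fhat
  exact congrArg expec (funext fun ω => by simp [chi])

lemma fhat_hfun (f : (I → Bool) → ℝ) (B S : Finset I) :
    fhat (fun ω => expec (fun ζ => f (mB B ω ζ)) - expec f) S
      = if S.Nonempty ∧ S ⊆ B then fhat f S else 0 := by
  rw [fhat_sub, fhat_gfun, fhat_const]
  by_cases h1 : S = ∅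
  · subst h1
    simp [fhat_empty]
  · rw [if_neg h1, sub_zero]
    have hne : S.Nonempty := Finset.nonempty_iff_ne_empty.mpr h1
    by_cases h2 : S ⊆ B
    · rw [if_pos h2, if_pos ⟨hne, h2⟩]
    · rw [if_neg h2, if_neg (fun hc => h2 hc.2)]

/-! ### Pivotality -/

lemma pivInd_nonneg (f : (I → Bool) → ℝ) (B : Finset I) (ω : I → Bool) :
    0 ≤ pivInd f B ω := by
  unfold pivInd; split <;> norm_num

lemma piv_event_mono {f : (I → Bool) → ℝ} {B : Finset I} {ω σ : I → Bool}
    (h : ∀ i ∉ B, ω i = σ i)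
    (hev : ∃ ω', (∀ i ∉ B, ω' i = ω i) ∧ f ω' ≠ f ω) :
    ∃ σ', (∀ i ∉ B, σ' i = σ i) ∧ f σ' ≠ f σ := by
  obtain ⟨ω', hag, hne⟩ := hev
  by_cases hc : f ω' = f σ
  · exact ⟨ω, h, fun hh => hne (by rw [hc, ← hh])⟩
  · exact ⟨ω', fun i hi => (hag i hi).trans (h i hi), hc⟩

lemma pivInd_congr {f : (I → Bool) → ℝ} {B : Finset I} {ω σ : I → Bool}
    (h : ∀ i ∉ B, ω i = σ i) : pivInd f B ω = pivInd f B σ := by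
  unfold pivInd
  by_cases hev : ∃ ω', (∀ i ∉ B, ω' i = ω i) ∧ f ω' ≠ f ω
  · rw [if_pos hev, if_pos (piv_event_mono h hev)]
  · rw [if_neg hev, if_neg fun hev' =>
      hev (piv_event_mono (fun i hi => (h i hi).symm) hev')]

lemma pivInd_eq_zero_const {f : (I → Bool) → ℝ} {B : Finset I} {ω : I → Bool}
    (h : pivInd f B ω = 0) :
    ∀ ω', (∀ i ∉ B, ω' i = ω i) → f ω' = f ω := by
  intro ω' hag
  by_contra hne
  unfold pivInd at h
  rw [if_pos ⟨ω', hag, hne⟩] at h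
  norm_num at h

lemma pivInd_eq_zero_or_one (f : (I → Bool) → ℝ) (B : Finset I) (ω : I → Bool) :
    pivInd f B ω = 0 ∨ pivInd f B ω = 1 := by
  unfold pivInd; split
  · right; rfl
  · left; rfl

/-! ### Supnorm -/

lemma abs_le_supnorm (f : (I → Bool) → ℝ) (ω : I → Bool) : |f ω| ≤ supnorm f :=
  le_ciSup (f := fun ω => |f ω|) (Set.Finite.bddAbove (Set.finite_range _)) ω

lemma supnorm_nonneg (f : (I → Bool) → ℝ) : 0 ≤ supnorm f :=
  (abs_nonneg _).trans (abs_le_supnorm f (fun _ => true))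

lemma abs_expec_le_supnorm (f : (I → Bool) → ℝ) (g : (I → Bool) → ℝ)
    (hg : ∀ η, |g η| ≤ supnorm f) : |expec g| ≤ supnorm f :=
  (abs_expec_le g).trans <| by
    calc expec (fun η => |g η|) ≤ expec (fun _ => supnorm f) := expec_mono hg
      _ = supnorm f := expec_const _

/-! ### The pointwise bound -/

lemma hfun_abs_le (f : (I → Bool) → ℝ) (B : Finset I) (ω : I → Bool) :
    |expec (fun ζ => f (mB B ω ζ)) - expec f|
      ≤ 2 * supnorm f * expec (pivInd f B) := by
  have hN0 : (Fintype.card (I → Bool) : ℝ) ≠ 0 := Ncast_pos.ne'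
  have hsum : ∑ ζ : I → Bool, ∑ η : I → Bool, f (mB B η ζ)
      = (Fintype.card (I → Bool) : ℝ) * ∑ σ : I → Bool, f σ := by
    rw [Finset.sum_comm, sum_pair_swap B (fun α _ => f α)]
    simp only [Finset.sum_const, Finset.card_univ, nsmul_eq_mul]
    rw [← Finset.mul_sum]
  have hEf : expec (fun ζ => expec (fun η => f (mB B η ζ))) = expec f := by
    unfold expec
    rw [← Finset.sum_div, hsum, mul_div_cancel_left₀ _ hN0]
  rw [← hEf, ← expec_sub]
  refine (abs_expec_le _).trans ?_
  have hub : ∀ ζ, |f (mB B ω ζ) - expec (fun η => f (mB B η ζ))|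
      ≤ 2 * supnorm f * pivInd f B ζ := by
    intro ζ
    have hagree : ∀ i ∉ B, mB B ω ζ i = ζ i := fun i hi => by simp [mB, hi]
    by_cases hz : pivInd f B (mB B ω ζ) = 0
    · have hconst := pivInd_eq_zero_const hz
      have hcv : expec (fun η => f (mB B η ζ)) = f (mB B ω ζ) := by
        rw [show (fun η => f (mB B η ζ)) = fun _ => f (mB B ω ζ) from
          funext fun η => hconst (mB B η ζ) (fun i hi => by simp [mB, hi])]
        exact expec_const _
      rw [hcv, sub_self, abs_zero]
      have := pivInd_nonneg f B ζ
      have := supnorm_nonneg f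
      positivity
    · have h1 : pivInd f B ζ = 1 := by
        rw [← pivInd_congr hagree]
        rcases pivInd_eq_zero_or_one f B (mB B ω ζ) with h | h
        · exact absurd h hz
        · exact h
      rw [h1, mul_one]
      have hb1 : |f (mB B ω ζ)| ≤ supnorm f := abs_le_supnorm f _
      have hb2 : |expec (fun η => f (mB B η ζ))| ≤ supnorm f :=
        abs_expec_le_supnorm f _ (fun η => abs_le_supnorm f _)
      calc |f (mB B ω ζ) - expec (fun η => f (mB B η ζ))|
          ≤ |f (mB B ω ζ)| + |expec (fun η => f (mB B η ζ))| := abs_sub _ _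
        _ ≤ supnorm f + supnorm f := add_le_add hb1 hb2
        _ = 2 * supnorm f := by ring
  calc expec (fun ζ => |f (mB B ω ζ) - expec (fun η => f (mB B η ζ))|)
      ≤ expec (fun ζ => 2 * supnorm f * pivInd f B ζ) := expec_mono hub
    _ = 2 * supnorm f * expec (pivInd f B) := expec_const_mul _ _

/-- Taking `W = B^c` in the pivotality bound:
`∑_{∅ ≠ S ⊆ B} f̂(S)² ≤ 4 ‖f‖_∞² P[Λ_B]²`. -/
theorem spectral_subset_pivotal_bound (f : (I → Bool) → ℝ) (B : Finset I) :
    (∑ S : Finset I, if S.Nonempty ∧ S ⊆ B then fhat f S ^ 2 else 0)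
      ≤ 4 * supnorm f ^ 2 * expec (pivInd f B) ^ 2 := by
  set h : (I → Bool) → ℝ := fun ω => expec (fun ζ => f (mB B ω ζ)) - expec f with hdef
  have h1 : (∑ S : Finset I, if S.Nonempty ∧ S ⊆ B then fhat f S ^ 2 else 0)
      = ∑ S : Finset I, fhat h S ^ 2 := by
    refine Finset.sum_congr rfl fun S _ => ?_
    rw [hdef, fhat_hfun]
    split <;> simp
  rw [h1, parseval]
  have hb : ∀ ω, h ω ^ 2 ≤ (2 * supnorm f * expec (pivInd f B)) ^ 2 := by
    intro ω
    have habs := abs_le.mp (hfun_abs_le f B ω)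
    exact sq_le_sq' habs.1 habs.2
  calc expec (fun ω => h ω ^ 2)
      ≤ expec (fun _ => (2 * supnorm f * expec (pivInd f B)) ^ 2) := expec_mono hb
    _ = (2 * supnorm f * expec (pivInd f B)) ^ 2 := expec_const _
    _ = 4 * supnorm f ^ 2 * expec (pivInd f B) ^ 2 := by ring
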